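/- A function O : {0,1}^6 → {-1,1} is the output of some three-module one-bit classical sequential processor if and only if the 4×16 matrix A1 defined by A1[(X1,X2)][(X3,X4,X5,X6)] = O(X1,...,X6) has at most 2 distinct rows and the 16×4 matrix A2 defined by A2[(X1,X2,X3,X4)][(X5,X6)] = O(X1,...,X6) has at most 2 distinct rows. -/
import Mathlib

lemma ncard_range_le_two {β γ : Type*} (g : Fin 2 → γ) (c : β → Fin 2) :
    (Set.range fun b => g (c b)).ncard ≤ 2 := by
  have hsub : (Set.range fun b => g (c b)) ⊆ {g 0, g 1} := by
    rintro _ ⟨b, rfl⟩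
    have : c b = 0 ∨ c b = 1 := by omega
    rcases this with h | h <;> simp [h]
  calc (Set.range fun b => g (c b)).ncard ≤ ({g 0, g 1} : Set γ).ncard :=
        Set.ncard_le_ncard hsub (Set.toFinite _)
    _ ≤ ({g 1} : Set γ).ncard + 1 := Set.ncard_insert_le _ _
    _ ≤ 2 := by rw [Set.ncard_singleton]

lemma cover_of_ncard_le_two {α β : Type*} [Fintype α] [Nonempty α] (S : α → β)
    (h : (Set.range S).ncard ≤ 2) :
    ∃ R : Fin 2 → β, (∀ s, ∃ a, R s = S a) ∧ ∀ a, S a = R 0 ∨ S a = R 1 := by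
  classical
  have hfin : (Set.range S).Finite := Set.finite_range S
  obtain ⟨a0⟩ := ‹Nonempty α›
  by_cases hall : ∀ a, S a = S a0
  · exact ⟨fun _ => S a0, fun s => ⟨a0, rfl⟩, fun a => Or.inl (hall a)⟩
  push_neg at hall
  obtain ⟨a1, ha1⟩ := hall
  refine ⟨![S a0, S a1], fun s => ?_, fun a => ?_⟩
  · have : s = 0 ∨ s = 1 := by omega
    rcases this with rfl | rfl
    · exact ⟨a0, rfl⟩
    · exact ⟨a1, rfl⟩
  by_contra hc
  push_neg at hc
  obtain ⟨h0, h1⟩ := hc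
  simp only [Matrix.cons_val_zero, Matrix.cons_val_one, Matrix.head_cons] at h0 h1
  have hsub : ({S a, S a0, S a1} : Set β) ⊆ Set.range S := by
    rintro x hx
    rcases hx with rfl | rfl | rfl <;> exact ⟨_, rfl⟩
  have hcard : ({S a, S a0, S a1} : Set β).ncard = 3 := by
    rw [Set.ncard_insert_of_notMem (by simp [h0, h1]),
      Set.ncard_insert_of_notMem (by simp; exact fun h => ha1 h.symm),
      Set.ncard_singleton]
  have := Set.ncard_le_ncard hsub hfin
  omega

/-- Domain of six input bits. -/
abbrev Bits6 := Fin 2 × Fin 2 × Fin 2 × Fin 2 × Fin 2 × Fin 2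

/-- Output of a three-module one-bit classical sequential processor given by the
module strategies `f1`, `f2`, `f3`. -/
def output3bit (f1 : Fin 2 × Fin 2 → Fin 2) (f2 : Fin 2 → Fin 2 × Fin 2 → Fin 2)
    (f3 : Fin 2 → Fin 2 × Fin 2 → ℤ) : Bits6 → ℤ
  | (x1, x2, x3, x4, x5, x6) => f3 (f2 (f1 (x1, x2)) (x3, x4)) (x5, x6)

/-- existence criterion, one-bit case: a ±1-valued function `O` on six bits
is the output of some three-module one-bit classical sequential processor iff both the
4×16 reshaping and the 16×4 reshaping of `O` have at most 2 distinct rows. -/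
theorem stmt2 (O : Bits6 → ℤ) (hO : ∀ x, O x = -1 ∨ O x = 1) :
    (∃ (f1 : Fin 2 × Fin 2 → Fin 2) (f2 : Fin 2 → Fin 2 × Fin 2 → Fin 2)
        (f3 : Fin 2 → Fin 2 × Fin 2 → ℤ),
      (∀ s p, f3 s p = -1 ∨ f3 s p = 1) ∧ O = output3bit f1 f2 f3) ↔
    ((Set.range (fun p : Fin 2 × Fin 2 =>
        fun q : Fin 2 × Fin 2 × Fin 2 × Fin 2 =>
          O (p.1, p.2, q.1, q.2.1, q.2.2.1, q.2.2.2))).ncard ≤ 2 ∧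
     (Set.range (fun p : Fin 2 × Fin 2 × Fin 2 × Fin 2 =>
        fun q : Fin 2 × Fin 2 =>
          O (p.1, p.2.1, p.2.2.1, p.2.2.2, q.1, q.2))).ncard ≤ 2) := by
  classical
  constructor
  · rintro ⟨f1, f2, f3, hf3, rfl⟩
    constructor
    · exact ncard_range_le_two
        (fun s => fun q : Fin 2 × Fin 2 × Fin 2 × Fin 2 =>
          f3 (f2 s (q.1, q.2.1)) (q.2.2.1, q.2.2.2))
        (fun p : Fin 2 × Fin 2 => f1 (p.1, p.2))
    · exact ncard_range_le_two
        (fun s => fun q : Fin 2 × Fin 2 => f3 s (q.1, q.2))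
        (fun p : Fin 2 × Fin 2 × Fin 2 × Fin 2 =>
          f2 (f1 (p.1, p.2.1)) (p.2.2.1, p.2.2.2))
  · rintro ⟨h1, h2⟩
    -- rows of the 4×16 matrix
    set S1 : Fin 2 × Fin 2 → (Fin 2 × Fin 2 × Fin 2 × Fin 2 → ℤ) :=
      fun p q => O (p.1, p.2, q.1, q.2.1, q.2.2.1, q.2.2.2) with hS1
    -- rows of the 16×4 matrix
    set S2 : Fin 2 × Fin 2 × Fin 2 × Fin 2 → (Fin 2 × Fin 2 → ℤ) :=
      fun p q => O (p.1, p.2.1, p.2.2.1, p.2.2.2, q.1, q.2) with hS2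
    obtain ⟨Q, hQmem, hQ⟩ := cover_of_ncard_le_two S1 h1
    obtain ⟨R, hRmem, hR⟩ := cover_of_ncard_le_two S2 h2
    -- representative prefixes for the two classes of S1-rows
    choose rep hrep using hQmem
    -- classifiers
    set f1 : Fin 2 × Fin 2 → Fin 2 := fun p => if S1 p = Q 0 then 0 else 1 with hf1
    set c : Fin 2 × Fin 2 × Fin 2 × Fin 2 → Fin 2 :=
      fun p => if S2 p = R 0 then 0 else 1 with hc
    have hS1f1 : ∀ p, S1 p = S1 (rep (f1 p)) := by
      intro p
      by_cases h : S1 p = Q 0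
      · simp [hf1, h, ← hrep 0]
      · have : S1 p = Q 1 := (hQ p).resolve_left h
        rw [this, hf1]
        simp only [this, h, if_false]
        by_cases h' : Q 1 = Q 0 <;> simp [h', ← hrep 0, ← hrep 1]
    have hS2c : ∀ p, S2 p = R (c p) := by
      intro p
      by_cases h : S2 p = R 0
      · simp [hc, h]
      · have : S2 p = R 1 := (hR p).resolve_left h
        rw [this, hc]
        simp only [this, h, if_false]
        by_cases h' : R 1 = R 0 <;> simp [h']
    refine ⟨f1, fun s q => c ((rep s).1, (rep s).2, q.1, q.2), R, ?_, ?_⟩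
    · intro s p
      obtain ⟨a, ha⟩ := hRmem s
      rw [ha]
      exact hO _
    · funext x
      obtain ⟨x1, x2, x3, x4, x5, x6⟩ := x
      show O (x1, x2, x3, x4, x5, x6)
        = R (c ((rep (f1 (x1, x2))).1, (rep (f1 (x1, x2))).2, x3, x4)) (x5, x6)
      rw [← hS2c]
      have h1' : S1 (x1, x2) (x3, x4, x5, x6)
          = S1 (rep (f1 (x1, x2))) (x3, x4, x5, x6) := by rw [← hS1f1]
      simpa [hS1, hS2] using h1'
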